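/- Let G be a connected finite simple graph not isomorphic to K₂, with n vertices, maximum degree Δ, and chromatic number k, and let W₀ be a closed walk of G of length p that visits every vertex of G. Then G admits an irregularising walk of length at most p + (n − 1)(2k − 2) + 2Δ; that is, ML^W(G) ≤ p + (n−1)(2k−2) + 2Δ. -/

import Mathlib

open SimpleGraph Finset

variable {V : Type*}

/-- `W.inc u` is the number of edge-traversals of the walk `W` incident to `u`. -/
def SimpleGraph.Walk.inc [DecidableEq V] {G : SimpleGraph V} {a b : V}
    (W : G.Walk a b) (u : V) : ℕ :=
  (W.edges.filter (fun e => u ∈ e)).length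

/-- A walk `W` of `G` is irregularising if in the multigraph `G + W` no two
adjacent vertices have the same degree. -/
def SimpleGraph.Walk.Irregularising [Fintype V] [DecidableEq V] {G : SimpleGraph V}
    [DecidableRel G.Adj] {a b : V} (W : G.Walk a b) : Prop :=
  ∀ ⦃u v : V⦄, G.Adj u v → G.degree u + W.inc u ≠ G.degree v + W.inc v

/-- The vertex sum `σ_ℓ(u)` of a labelling. -/
def vertexSum [Fintype V] [DecidableEq V] (G : SimpleGraph V) [DecidableRel G.Adj]
    (ℓ : Sym2 V → ℕ) (u : V) : ℕ :=
  ∑ w ∈ G.neighborFinset u, ℓ s(u, w)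

/-- A labelling is proper if adjacent vertices get distinct sums. -/
def IsProperLabelling [Fintype V] [DecidableEq V] (G : SimpleGraph V) [DecidableRel G.Adj]
    (ℓ : Sym2 V → ℕ) : Prop :=
  ∀ ⦃u v : V⦄, G.Adj u v → vertexSum G ℓ u ≠ vertexSum G ℓ v

/-- Minimum length of an irregularising walk, as an extended natural number. -/
noncomputable def MLW [Fintype V] [DecidableEq V] (G : SimpleGraph V) [DecidableRel G.Adj] : ℕ∞ :=
  ⨅ (a : V) (b : V) (W : G.Walk a b) (_ : W.Irregularising), (W.length : ℕ∞)

/-- Infimum over irregularising walks of the maximum number of traversals of a single edge. -/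
noncomputable def MEW [Fintype V] [DecidableEq V] (G : SimpleGraph V) [DecidableRel G.Adj] : ℕ∞ :=
  ⨅ (a : V) (b : V) (W : G.Walk a b) (_ : W.Irregularising),
    ((W.edges.toFinset.sup fun e => W.edges.count e : ℕ) : ℕ∞)

/-- Infimum over irregularising walks of `max_u inc_W(u)`. -/
noncomputable def MVW [Fintype V] [DecidableEq V] (G : SimpleGraph V) [DecidableRel G.Adj] : ℕ∞ :=
  ⨅ (a : V) (b : V) (W : G.Walk a b) (_ : W.Irregularising),
    ((Finset.univ.sup fun u => W.inc u : ℕ) : ℕ∞)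


namespace SimpleGraph.Walk

variable [DecidableEq V] {G : SimpleGraph V} {a b c : V}

lemma inc_nil {a : V} (u : V) : (Walk.nil : G.Walk a a).inc u = 0 := rfl

lemma inc_cons (h : G.Adj a b) (W : G.Walk b c) (u : V) :
    (Walk.cons h W).inc u = (if u ∈ (s(a, b) : Sym2 V) then 1 else 0) + W.inc u := by
  simp only [inc, edges_cons, List.filter_cons]
  split <;> simp_all <;> omega

lemma inc_append (W₁ : G.Walk a b) (W₂ : G.Walk b c) (u : V) :
    (W₁.append W₂).inc u = W₁.inc u + W₂.inc u := by
  simp [inc, edges_append, List.filter_append]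

lemma inc_of_perm {a b c d : V} {W₁ : G.Walk a b} {W₂ : G.Walk c d} (h : W₁.edges.Perm W₂.edges) (u : V) :
    W₁.inc u = W₂.inc u := by
  simp only [inc]
  exact (h.filter _).length_eq

lemma inc_rotate (W : G.Walk b b) (h : a ∈ W.support) (u : V) :
    (W.rotate a h).inc u = W.inc u :=
  inc_of_perm ((W.rotate_edges a h).perm) u


/-- Insert a single "bounce" `u → v → u` into a walk at an occurrence of `u`. -/
lemma exists_augment_one {u v : V} (W : G.Walk a b) (hu : u ∈ W.support)
    (hadj : G.Adj u v) :
    ∃ W' : G.Walk a b, W'.length = W.length + 2 ∧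
      (∀ z, z ∈ W.support → z ∈ W'.support) ∧
      (∀ z, W'.inc z = W.inc z +
        ((if z = u then 2 else 0) + (if z = v then 2 else 0))) := by
  classical
  refine ⟨(W.takeUntil u hu).append (Walk.cons hadj (Walk.cons hadj.symm (W.dropUntil u hu))),
    ?_, ?_, ?_⟩
  · have h := congr_arg Walk.length (W.take_spec hu)
    simp only [length_append] at h ⊢
    simp only [length_cons]
    omega
  · intro z hz
    rw [← W.take_spec hu, mem_support_append_iff] at hz
    rw [mem_support_append_iff]
    rcases hz with hz | hz
    · exact Or.inl hz
    · right
      simp only [support_cons, List.mem_cons] at hz ⊢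
      tauto
  · intro z
    have h := congr_arg (fun X => Walk.inc X z) (W.take_spec hu)
    simp only [inc_append] at h
    simp only [inc_append, inc_cons]
    have hne : u ≠ v := hadj.ne
    have hsymm : (s(v, u) : Sym2 V) = s(u, v) := Sym2.eq_swap
    rw [hsymm]
    by_cases hzu : z = u
    · subst hzu
      simp [Sym2.mem_iff, hne]
      omega
    · by_cases hzv : z = v
      · subst hzv
        simp [Sym2.mem_iff, hzu]
        omega
      · simp [Sym2.mem_iff, hzu, hzv]
        omega

/-- Insert `β` bounces `u → v → u` into a walk. -/
lemma exists_augment_rep {u v : V} (W : G.Walk a b) (hu : u ∈ W.support)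
    (hadj : G.Adj u v) (β : ℕ) :
    ∃ W' : G.Walk a b, W'.length = W.length + 2 * β ∧
      (∀ z, z ∈ W.support → z ∈ W'.support) ∧
      (∀ z, W'.inc z = W.inc z +
        ((if z = u then 2 * β else 0) + (if z = v then 2 * β else 0))) := by
  induction β with
  | zero => exact ⟨W, by omega, fun z hz => hz, fun z => by simp⟩
  | succ n ih =>
    obtain ⟨W', h1, h2, h3⟩ := ih
    obtain ⟨W'', g1, g2, g3⟩ := exists_augment_one W' (h2 u hu) hadj
    refine ⟨W'', ?_, fun z hz => g2 z (h2 z hz), fun z => ?_⟩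
    · rw [g1, h1]; ring
    · rw [g3 z, h3 z]
      split_ifs <;> omega


/-- Alternating walk of length `ℓ` along an edge. -/
lemma exists_alt {a b : V} (h : G.Adj a b) (ℓ : ℕ) :
    ∃ (e : V) (T : G.Walk a e), T.length = ℓ ∧
      ∀ z, T.inc z = if z = a ∨ z = b then ℓ else 0 := by
  induction ℓ generalizing a b with
  | zero =>
    exact ⟨a, Walk.nil, rfl, fun z => by simp [Walk.inc]⟩
  | succ n ih =>
    obtain ⟨e, T, hl, hi⟩ := ih h.symm
    refine ⟨e, Walk.cons h T, by simp [hl], fun z => ?_⟩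
    rw [inc_cons, hi z]
    by_cases hz : z = a ∨ z = b
    · have hz' : z ∈ (s(a, b) : Sym2 V) := by rw [Sym2.mem_iff]; exact hz
      rw [if_pos hz', if_pos hz, if_pos (Or.comm.mp hz)]
      omega
    · have hz' : z ∉ (s(a, b) : Sym2 V) := by rw [Sym2.mem_iff]; exact hz
      rw [if_neg hz', if_neg hz, if_neg (fun h' => hz (Or.comm.mp h'))]


lemma length_rotate' (W : G.Walk b b) (h : a ∈ W.support) :
    (W.rotate a h).length = W.length := by
  have h1 := congr_arg Walk.length (W.take_spec h)
  simp only [Walk.length_append] at h1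
  simp only [Walk.rotate, Walk.length_append]
  omega

lemma support_rotate_all (W : G.Walk b b) (h : a ∈ W.support)
    (hvis : ∀ z, z ∈ W.support) (z : V) : z ∈ (W.rotate a h).support := by
  have hz := hvis z
  rw [← W.take_spec h, mem_support_append_iff] at hz
  simp only [Walk.rotate, mem_support_append_iff]
  tauto


end SimpleGraph.Walk

open SimpleGraph.Walk

lemma exists_avoid (F : Finset ℕ) (M : ℕ) (h : F.card < M) : ∃ t, t < M ∧ t ∉ F := by
  have hne : (Finset.range M \ F).Nonempty := by
    rw [← Finset.card_pos]
    have h1 : (Finset.range M).card - F.card ≤ (Finset.range M \ F).card :=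
      Finset.le_card_sdiff F (Finset.range M)
    rw [Finset.card_range] at h1
    omega
  obtain ⟨t, ht⟩ := hne
  rw [Finset.mem_sdiff, Finset.mem_range] at ht
  exact ⟨t, ht.1, ht.2⟩

/-- The root-fixing lemma: if the values are proper away from `r`, a tail of length
at most `2Δ` starting at `r` fixes everything. -/
lemma rootfix [Fintype V] [DecidableEq V] {G : SimpleGraph V} [DecidableRel G.Adj] (r : V)
    (hd : 2 ≤ G.degree r) (val : V → ℕ)
    (hval : ∀ ⦃u w : V⦄, G.Adj u w → u ≠ r → w ≠ r → val u ≠ val w) :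
    ∃ (e : V) (T : G.Walk r e), T.length ≤ 2 * G.maxDegree ∧
      ∀ ⦃u w : V⦄, G.Adj u w → val u + T.inc u ≠ val w + T.inc w := by
  classical
  have hΔr : G.degree r ≤ G.maxDegree := G.degree_le_maxDegree r
  have hΔ2 : 2 ≤ G.maxDegree := le_trans hd hΔr
  by_cases hc1 : ∃ v, G.Adj r v ∧ val v ≠ val r
  · -- Case 1 : some neighbour of `r` has a different value
    obtain ⟨v, hrv, hvv⟩ := hc1
    have hΔv : G.degree v ≤ G.maxDegree := G.degree_le_maxDegree v
    have hrvne : r ≠ v := hrv.ne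
    set F : Finset ℕ :=
      ((G.neighborFinset r).erase v).image (fun u => val u - val r) ∪
      ((G.neighborFinset v).erase r).image (fun x => val x - val v) with hF
    have hvr' : v ∈ G.neighborFinset r := by rwa [SimpleGraph.mem_neighborFinset]
    have hrv' : r ∈ G.neighborFinset v := by
      rw [SimpleGraph.mem_neighborFinset]; exact hrv.symm
    have hFcard : F.card < 2 * G.maxDegree - 1 := by
      have h1 := Finset.card_image_le (s := (G.neighborFinset r).erase v)
        (f := fun u => val u - val r)
      have h2 := Finset.card_image_le (s := (G.neighborFinset v).erase r)
        (f := fun x => val x - val v)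
      have h3 := Finset.card_union_le
        (((G.neighborFinset r).erase v).image (fun u => val u - val r))
        (((G.neighborFinset v).erase r).image (fun x => val x - val v))
      rw [Finset.card_erase_of_mem hvr', G.card_neighborFinset_eq_degree] at h1
      rw [Finset.card_erase_of_mem hrv', G.card_neighborFinset_eq_degree] at h2
      have hdv : 0 < G.degree v := by
        rw [← G.card_neighborFinset_eq_degree]
        exact Finset.card_pos.mpr ⟨r, hrv'⟩
      rw [← hF] at h3
      omega
    obtain ⟨ℓ, hℓM, hℓF⟩ := exists_avoid F _ hFcard
    obtain ⟨e, T, hTl, hTi⟩ := exists_alt hrv ℓ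
    refine ⟨e, T, by omega, fun u w hadj heq => ?_⟩
    rw [hTi u, hTi w] at heq
    have hFr : ∀ z, G.Adj r z → z ≠ v → val z - val r ∈ F := fun z hz hzv =>
      Finset.mem_union_left _ (Finset.mem_image_of_mem _
        (Finset.mem_erase.mpr ⟨hzv, (G.mem_neighborFinset _ z).mpr hz⟩))
    have hFv : ∀ z, G.Adj v z → z ≠ r → val z - val v ∈ F := fun z hz hzr =>
      Finset.mem_union_right _ (Finset.mem_image_of_mem _
        (Finset.mem_erase.mpr ⟨hzr, (G.mem_neighborFinset _ z).mpr hz⟩))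
    rcases eq_or_ne u r with hur | hur
    · subst u
      have hwr : w ≠ r := hadj.ne'
      rcases eq_or_ne w v with hwv | hwv
      · subst w
        rw [if_pos (Or.inl rfl), if_pos (Or.inr rfl)] at heq
        omega
      · rw [if_pos (Or.inl rfl), if_neg (by tauto)] at heq
        have : val w - val r = ℓ := by omega
        exact hℓF (this ▸ hFr w hadj hwv)
    · rcases eq_or_ne w r with hwr | hwr
      · subst w
        have hur' := hur
        rcases eq_or_ne u v with huv | huv
        · subst u
          rw [if_pos (Or.inr rfl), if_pos (Or.inl rfl)] at heq
          omega
        · rw [if_neg (by tauto), if_pos (Or.inl rfl)] at heq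
          have : val u - val r = ℓ := by omega
          exact hℓF (this ▸ hFr u hadj.symm huv)
      · rcases eq_or_ne u v with huv | huv
        · subst u
          have hwv : w ≠ v := hadj.ne'
          rw [if_pos (Or.inr rfl), if_neg (by tauto)] at heq
          have : val w - val v = ℓ := by omega
          exact hℓF (this ▸ hFv w hadj hwr)
        · rcases eq_or_ne w v with hwv | hwv
          · subst w
            rw [if_neg (by tauto), if_pos (Or.inr rfl)] at heq
            have : val u - val v = ℓ := by omega
            exact hℓF (this ▸ hFv u hadj.symm hur)
          · rw [if_neg (by tauto), if_neg (by tauto)] at heq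
            exact hval hadj hur hwr (by omega)
  · -- Case 2 : every neighbour of `r` has value `X = val r`
    push_neg at hc1
    set X := val r with hX
    by_cases hc2 : ∃ v x, G.Adj r v ∧ G.Adj v x ∧ x ≠ r ∧ val x ≠ X + 1
    · -- Case 2a
      obtain ⟨v, x, hrv, hvx, hxr, hx1⟩ := hc2
      have hvr : v ≠ r := hrv.ne'
      have hxv : x ≠ v := hvx.ne'
      have hΔv : G.degree v ≤ G.maxDegree := G.degree_le_maxDegree v
      have hΔx : G.degree x ≤ G.maxDegree := G.degree_le_maxDegree x
      have hrv' : r ∈ G.neighborFinset v := by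
        rw [SimpleGraph.mem_neighborFinset]; exact hrv.symm
      have hxv' : x ∈ G.neighborFinset v := by rwa [SimpleGraph.mem_neighborFinset]
      have hvx' : v ∈ G.neighborFinset x := by
        rw [SimpleGraph.mem_neighborFinset]; exact hvx.symm
      set F : Finset ℕ :=
        ((((G.neighborFinset v).erase r).erase x).image (fun y => val y - (X + 1)) ∪
        (((G.neighborFinset x).erase v).image (fun y => val y - val x))) ∪ {0, 1} with hF
      have hFcard : F.card < 2 * G.maxDegree := by
        have h1 := Finset.card_image_le (s := ((G.neighborFinset v).erase r).erase x)
          (f := fun y => val y - (X + 1))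
        have h2 := Finset.card_image_le (s := (G.neighborFinset x).erase v)
          (f := fun y => val y - val x)
        have h3 := Finset.card_union_le
          ((((G.neighborFinset v).erase r).erase x).image (fun y => val y - (X + 1)))
          ((((G.neighborFinset x).erase v)).image (fun y => val y - val x))
        have h4 := Finset.card_union_le
          (((((G.neighborFinset v).erase r).erase x).image (fun y => val y - (X + 1))) ∪
          ((((G.neighborFinset x).erase v)).image (fun y => val y - val x)))
          ({0, 1} : Finset ℕ)
        have h5 : ({0, 1} : Finset ℕ).card ≤ 2 := by decide
        have h6 : (((G.neighborFinset v).erase r).erase x).card = G.degree v - 2 := by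
          rw [Finset.card_erase_of_mem (Finset.mem_erase.mpr ⟨hxr, hxv'⟩),
            Finset.card_erase_of_mem hrv', G.card_neighborFinset_eq_degree]
          omega
        have h7 : ((G.neighborFinset x).erase v).card = G.degree x - 1 := by
          rw [Finset.card_erase_of_mem hvx', G.card_neighborFinset_eq_degree]
        have hdv : 2 ≤ G.degree v := by
          rw [← G.card_neighborFinset_eq_degree]
          exact Finset.one_lt_card.mpr ⟨r, hrv', x, hxv', (fun h => hxr h.symm)⟩
        have hdx : 0 < G.degree x := by
          rw [← G.card_neighborFinset_eq_degree]
          exact Finset.card_pos.mpr ⟨v, hvx'⟩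
        rw [← hF] at h4
        omega
      obtain ⟨t, htM, htF⟩ := exists_avoid F _ hFcard
      have ht0 : t ≠ 0 := fun h => htF (by simp [hF, h])
      have ht1 : t ≠ 1 := fun h => htF (by simp [hF, h])
      obtain ⟨e, T', hTl, hTi⟩ := exists_alt hvx t
      refine ⟨e, Walk.cons hrv T', by rw [Walk.length_cons, hTl]; omega, fun u w hadj heq => ?_⟩
      rw [inc_cons, inc_cons, hTi u, hTi w] at heq
      -- incs : r ↦ 1, v ↦ 1 + t, x ↦ t, else 0
      have hFv : ∀ z, G.Adj v z → z ≠ r → z ≠ x → val z - (X + 1) ∈ F := fun z hz hzr hzx =>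
        Finset.mem_union_left _ (Finset.mem_union_left _ (Finset.mem_image_of_mem _
          (Finset.mem_erase.mpr ⟨hzx, Finset.mem_erase.mpr
            ⟨hzr, (G.mem_neighborFinset _ z).mpr hz⟩⟩)))
      have hFx : ∀ z, G.Adj x z → z ≠ v → val z - val x ∈ F := fun z hz hzv =>
        Finset.mem_union_left _ (Finset.mem_union_right _ (Finset.mem_image_of_mem _
          (Finset.mem_erase.mpr ⟨hzv, (G.mem_neighborFinset _ z).mpr hz⟩)))
      have incu : ∀ z, (if z ∈ (s(r, v) : Sym2 V) then 1 else 0) +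
          (if z = v ∨ z = x then t else 0) =
          if z = r then 1 else if z = v then 1 + t else if z = x then t else 0 := by
        intro z
        rcases eq_or_ne z r with h | h
        · subst z
          simp [Sym2.mem_iff, hrv.ne, Ne.symm hxr]
        · rcases eq_or_ne z v with h2 | h2
          · subst z
            simp [Sym2.mem_iff, hvr, Ne.symm hxv]
          · rcases eq_or_ne z x with h3 | h3
            · subst z
              simp [Sym2.mem_iff, hxr, hxv]
            · simp [Sym2.mem_iff, h, h2, h3]
      rw [incu u, incu w] at heq
      clear incu
      -- now the case bash
      rcases eq_or_ne u r with hur | hur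
      · subst u
        have hwr : w ≠ r := hadj.ne'
        rw [if_pos rfl, if_neg hwr] at heq
        have hw0 : val w = X := hc1 w hadj
        rcases eq_or_ne w v with hwv | hwv
        · subst w; rw [if_pos rfl] at heq; omega
        · rw [if_neg hwv] at heq
          rcases eq_or_ne w x with hwx | hwx
          · subst w; rw [if_pos rfl] at heq; omega
          · rw [if_neg hwx] at heq; omega
      · rcases eq_or_ne w r with hwr | hwr
        · subst w
          rw [if_neg hur, if_pos rfl] at heq
          have hu0 : val u = X := hc1 u hadj.symm
          rcases eq_or_ne u v with huv | huv
          · subst u; rw [if_pos rfl] at heq; omega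
          · rw [if_neg huv] at heq
            rcases eq_or_ne u x with hux | hux
            · subst u; rw [if_pos rfl] at heq; omega
            · rw [if_neg hux] at heq; omega
        · rw [if_neg hur, if_neg hwr] at heq
          have hv0 : val v = X := hc1 v hrv
          rcases eq_or_ne u v with huv | huv
          · subst u
            have hwv : w ≠ v := hadj.ne'
            rw [if_pos rfl, if_neg hwv] at heq
            rcases eq_or_ne w x with hwx | hwx
            · subst w; rw [if_pos rfl] at heq; omega
            · rw [if_neg hwx] at heq
              have : val w - (X + 1) = t := by omega
              exact htF (this ▸ hFv w hadj hwr hwx)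
          · rw [if_neg huv] at heq
            rcases eq_or_ne w v with hwv | hwv
            · subst w
              rw [if_pos rfl] at heq
              rcases eq_or_ne u x with hux | hux
              · subst u; rw [if_pos rfl] at heq; omega
              · rw [if_neg hux] at heq
                have : val u - (X + 1) = t := by omega
                exact htF (this ▸ hFv u hadj.symm hur hux)
            · rw [if_neg hwv] at heq
              rcases eq_or_ne u x with hux | hux
              · subst u
                have hwx : w ≠ x := hadj.ne'
                rw [if_pos rfl, if_neg hwx] at heq
                have : val w - val x = t := by omega
                exact htF (this ▸ hFx w hadj hwv)
              · rw [if_neg hux] at heq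
                rcases eq_or_ne w x with hwx | hwx
                · subst w
                  rw [if_pos rfl] at heq
                  have : val u - val x = t := by omega
                  exact htF (this ▸ hFx u hadj.symm huv)
                · rw [if_neg hwx] at heq
                  exact hval hadj hur hwr (by omega)
    · -- Case 2b
      push_neg at hc2
      obtain ⟨v₁, hv1, v₂, hv2, hne12⟩ := Finset.one_lt_card.mp
        (by rw [G.card_neighborFinset_eq_degree]; omega :
          1 < (G.neighborFinset r).card)
      rw [SimpleGraph.mem_neighborFinset] at hv1 hv2
      have h1r : v₁ ≠ r := hv1.ne'
      have h2r : v₂ ≠ r := hv2.ne'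
      set T : G.Walk r r :=
        Walk.cons hv1 (Walk.cons hv1.symm (Walk.cons hv2 (Walk.cons hv2.symm Walk.nil)))
        with hT
      have hTlen : T.length = 4 := rfl
      have hTi : ∀ z, T.inc z = if z = r then 4 else if z = v₁ then 2 else
          if z = v₂ then 2 else 0 := by
        intro z
        simp only [hT, inc_cons, Walk.inc, Walk.edges_nil, List.filter_nil,
          List.length_nil]
        rcases eq_or_ne z r with h | h
        · subst z
          simp [Sym2.mem_iff, hv1.ne, hv2.ne]
        · rcases eq_or_ne z v₁ with h2 | h2
          · subst z
            simp [Sym2.mem_iff, h1r, hne12]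
          · rcases eq_or_ne z v₂ with h3 | h3
            · subst z
              simp [Sym2.mem_iff, h2r, Ne.symm hne12]
            · simp [Sym2.mem_iff, h, h2, h3]
      refine ⟨r, T, by omega, fun u w hadj heq => ?_⟩
      rw [hTi u, hTi w] at heq
      have key : ∀ z, G.Adj r z → val z = X := hc1
      have key2 : ∀ z y, G.Adj r z → G.Adj z y → y ≠ r → val y = X + 1 := hc2
      rcases eq_or_ne u r with hur | hur
      · subst u
        have hwr : w ≠ r := hadj.ne'
        rw [if_pos rfl, if_neg hwr] at heq
        have := key w hadj
        split_ifs at heq <;> omega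
      · rcases eq_or_ne w r with hwr | hwr
        · subst w
          rw [if_neg hur, if_pos rfl] at heq
          have := key u hadj.symm
          split_ifs at heq <;> omega
        · rw [if_neg hur, if_neg hwr] at heq
          rcases eq_or_ne u v₁ with hu1 | hu1
          · subst u
            rw [if_pos rfl] at heq
            have hu0 : val v₁ = X := key v₁ hv1
            have hw1 : val w = X + 1 := key2 v₁ w hv1 hadj hwr
            rcases eq_or_ne w v₂ with hw2 | hw2
            · subst w
              exact hval hadj h1r h2r (by rw [hu0, key v₂ hv2])
            · rw [if_neg hadj.ne', if_neg hw2] at heq; omega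
          · rcases eq_or_ne u v₂ with hu2 | hu2
            · subst u
              rw [if_neg hu1, if_pos rfl] at heq
              have hu0 : val v₂ = X := key v₂ hv2
              have hw1 : val w = X + 1 := key2 v₂ w hv2 hadj hwr
              rcases eq_or_ne w v₁ with hw1' | hw1'
              · subst w
                exact hval hadj h2r h1r (by rw [hu0, key v₁ hv1])
              · rw [if_neg hw1', if_neg hadj.ne'] at heq; omega
            · rw [if_neg hu1, if_neg hu2] at heq
              rcases eq_or_ne w v₁ with hw1 | hw1
              · subst w
                rw [if_pos rfl] at heq
                have := key v₁ hv1
                have := key2 v₁ u hv1 hadj.symm hur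
                omega
              · rcases eq_or_ne w v₂ with hw2 | hw2
                · subst w
                  rw [if_neg hw1, if_pos rfl] at heq
                  have := key v₂ hv2
                  have := key2 v₂ u hv2 hadj.symm hur
                  omega
                · rw [if_neg hw1, if_neg hw2] at heq
                  exact hval hadj hur hwr (by omega)

lemma exists_beta (k cur tgt : ℕ) (hk : 1 ≤ k) (hpar : cur % 2 = tgt % 2) :
    ∃ β, β < k ∧ (cur + 2 * β) % (2 * k) = tgt % (2 * k) := by
  have hle : cur ≤ tgt + 2 * k * (cur + 1) := by
    have h1 : 2 * 1 * (cur + 1) ≤ 2 * k * (cur + 1) :=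
      Nat.mul_le_mul_right _ (by omega)
    omega
  set D := tgt + 2 * k * (cur + 1) - cur with hD
  have hsum : cur + D = tgt + 2 * k * (cur + 1) := by omega
  have he : 2 * k * (cur + 1) = 2 * (k * (cur + 1)) := by ring
  have hDe : D % 2 = 0 := by
    have h2 : (2 * (k * (cur + 1))) % 2 = 0 := Nat.mul_mod_right 2 _
    omega
  refine ⟨(D / 2) % k, Nat.mod_lt _ (by omega), ?_⟩
  have h2d : 2 * (D / 2) = D := by omega
  have hmod : (D / 2) % k % k = (D / 2) % k := Nat.mod_mod_of_dvd _ dvd_rfl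
  have step1 : (2 * ((D / 2) % k)) % (2 * k) = (2 * (D / 2)) % (2 * k) := by
    have := (Nat.mod_modEq (D / 2) k).mul_left' (c := 2)
    exact this
  calc (cur + 2 * ((D / 2) % k)) % (2 * k)
      = (cur % (2 * k) + (2 * ((D / 2) % k)) % (2 * k)) % (2 * k) := by
        rw [Nat.add_mod]
    _ = (cur % (2 * k) + (2 * (D / 2)) % (2 * k)) % (2 * k) := by rw [step1]
    _ = (cur + D) % (2 * k) := by rw [h2d, ← Nat.add_mod]
    _ = (tgt + (2 * k) * (cur + 1)) % (2 * k) := by rw [hsum]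
    _ = tgt % (2 * k) := Nat.add_mul_mod_self_left tgt (2 * k) (cur + 1)

lemma exists_parent {G : SimpleGraph V} (hconn : G.Connected) (r u : V) (hur : u ≠ r) :
    ∃ v, G.Adj u v ∧ G.dist v r + 1 = G.dist u r := by
  obtain ⟨W, hW⟩ := hconn.exists_walk_length_eq_dist u r
  cases W with
  | nil => exact absurd rfl hur
  | @cons _ v _ h W' =>
    refine ⟨v, h, ?_⟩
    have h1 : G.dist v r ≤ W'.length := SimpleGraph.dist_le W'
    obtain ⟨P, hP⟩ := hconn.exists_walk_length_eq_dist v r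
    have h2 : G.dist u r ≤ (Walk.cons h P).length := SimpleGraph.dist_le _
    rw [Walk.length_cons] at h2 hW
    omega

lemma dist_lt_card [Fintype V] [DecidableEq V] {G : SimpleGraph V} (hconn : G.Connected) (u r : V) :
    G.dist u r < Fintype.card V := by
  obtain ⟨W⟩ := hconn u r
  have h1 : G.dist u r ≤ W.toPath.1.length := SimpleGraph.dist_le _
  exact lt_of_le_of_lt h1 W.toPath.2.length_lt

lemma stage1_inner [Fintype V] [DecidableEq V] {G : SimpleGraph V} [DecidableRel G.Adj]
    (r : V) (W₁ : G.Walk r r)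
    (k : ℕ) (hk : 1 ≤ k) (tgt : V → ℕ)
    (htgtpar : ∀ u, tgt u % 2 = (G.degree u + W₁.inc u) % 2)
    (w : V → V) (hw : ∀ u, u ≠ r → G.Adj u (w u) ∧ G.dist (w u) r + 1 = G.dist u r)
    (m : ℕ) (hm : 1 ≤ m) :
    ∀ (L : List V), L.Nodup → (∀ u ∈ L, G.dist u r = m) →
    ∀ (W₂ : G.Walk r r), (∀ z, z ∈ W₂.support) →
      (∀ z, W₂.inc z % 2 = W₁.inc z % 2) →
      ∃ W₃ : G.Walk r r,
        (∀ z, z ∈ W₃.support) ∧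
        (∀ z, W₃.inc z % 2 = W₁.inc z % 2) ∧
        W₃.length ≤ W₂.length + (2 * k - 2) * L.length ∧
        (∀ z, G.dist z r ≠ m → G.dist z r ≠ m - 1 → W₃.inc z = W₂.inc z) ∧
        (∀ z, G.dist z r = m → z ∉ L → W₃.inc z = W₂.inc z) ∧
        (∀ u ∈ L, (G.degree u + W₃.inc u) % (2 * k) = tgt u % (2 * k)) := by
  intro L
  induction L with
  | nil =>
    intro _ _ W₂ hsup hpar
    exact ⟨W₂, hsup, hpar, by simp, fun z _ _ => rfl, fun z _ _ => rfl, by simp⟩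
  | cons u L' ih =>
    intro hnd hdist W₂ hsup hpar
    obtain ⟨W₃', hsup', hpar', hlen', hunch', hunch2', hcong'⟩ :=
      ih hnd.of_cons (fun z hz => hdist z (List.mem_cons_of_mem _ hz)) W₂ hsup hpar
    have hu : G.dist u r = m := hdist u List.mem_cons_self
    have hur : u ≠ r := by
      intro h; rw [h, SimpleGraph.dist_self] at hu; omega
    obtain ⟨hadj, hwdist⟩ := hw u hur
    have hwne : w u ≠ u := by
      intro h; rw [h, hu] at hwdist; omega
    have hwdm : G.dist (w u) r = m - 1 := by omega
    have hwm : G.dist (w u) r ≠ m := by omega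
    have hpu : (G.degree u + W₃'.inc u) % 2 = tgt u % 2 := by
      have h1 := hpar' u
      have h2 := htgtpar u
      omega
    obtain ⟨β, hβk, hβmod⟩ := exists_beta k (G.degree u + W₃'.inc u) (tgt u) hk hpu
    obtain ⟨W₃, hlen, hsupn, hinc⟩ := exists_augment_rep W₃' (hsup' u) hadj β
    have hwu : ∀ z, z ≠ u → z ≠ w u → W₃.inc z = W₃'.inc z := by
      intro z h1 h2
      rw [hinc z, if_neg h1, if_neg h2]
      omega
    refine ⟨W₃, fun z => hsupn z (hsup' z), ?_, ?_, ?_, ?_, ?_⟩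
    · intro z
      have ha := hinc z
      have hb := hpar' z
      split_ifs at ha <;> omega
    · rw [hlen]
      simp only [List.length_cons]
      have : 2 * β ≤ 2 * k - 2 := by omega
      calc W₃'.length + 2 * β ≤ W₂.length + (2 * k - 2) * L'.length + (2 * k - 2) := by
            omega
        _ = W₂.length + (2 * k - 2) * (L'.length + 1) := by ring
    · intro z hz1 hz2
      rw [hwu z (by intro h; rw [h] at hz1; exact hz1 hu)
        (by intro h; rw [h] at hz2; exact hz2 hwdm)]
      exact hunch' z hz1 hz2
    · intro z hz1 hz2
      have hzu : z ≠ u := by intro h; exact hz2 (h ▸ List.mem_cons_self)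
      have hzw : z ≠ w u := by intro h; rw [h, hwdm] at hz1; omega
      rw [hwu z hzu hzw]
      exact hunch2' z hz1 (fun hmem => hz2 (List.mem_cons_of_mem _ hmem))
    · intro z hz
      rcases List.mem_cons.mp hz with h | h
      · subst z
        rw [hinc u, if_pos rfl, if_neg (fun h => hwne h.symm)]
        calc (G.degree u + (W₃'.inc u + (2 * β + 0))) % (2 * k)
            = (G.degree u + W₃'.inc u + 2 * β) % (2 * k) := by ring_nf
          _ = tgt u % (2 * k) := hβmod
      · have hzu : z ≠ u := by
          intro hh; subst hh; exact (hnd.notMem) h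
        have hzw : z ≠ w u := by
          intro hh
          have := hdist z (List.mem_cons_of_mem _ h)
          rw [hh, hwdm] at this; omega
        rw [hwu z hzu hzw]
        exact hcong' z h

lemma stage1 [Fintype V] [DecidableEq V] {G : SimpleGraph V} [DecidableRel G.Adj]
    (hconn : G.Connected) (r : V) (W₁ : G.Walk r r) (hvis : ∀ z, z ∈ W₁.support)
    (k : ℕ) (hk : 1 ≤ k) (tgt : V → ℕ)
    (htgtpar : ∀ u, tgt u % 2 = (G.degree u + W₁.inc u) % 2) :
    ∃ W₂ : G.Walk r r, (∀ z, z ∈ W₂.support) ∧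
      W₂.length ≤ W₁.length + (2 * k - 2) * (Fintype.card V - 1) ∧
      ∀ u, u ≠ r → (G.degree u + W₂.inc u) % (2 * k) = tgt u % (2 * k) := by
  classical
  set n := Fintype.card V with hn
  have hw : ∀ u, u ≠ r → ∃ v, G.Adj u v ∧ G.dist v r + 1 = G.dist u r :=
    fun u hu => exists_parent hconn r u hu
  choose w hw1 hw2 using hw
  set w' : V → V := fun u => if h : u ≠ r then w u h else r with hw'
  have hwprop : ∀ u, u ≠ r → G.Adj u (w' u) ∧ G.dist (w' u) r + 1 = G.dist u r := by
    intro u hu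
    simp only [hw', dif_pos hu]
    exact ⟨hw1 u hu, hw2 u hu⟩
  have main : ∀ t, t + 1 ≤ n → ∃ W₂ : G.Walk r r, (∀ z, z ∈ W₂.support) ∧
      (∀ z, W₂.inc z % 2 = W₁.inc z % 2) ∧
      W₂.length ≤ W₁.length +
        (2 * k - 2) * (univ.filter (fun u => n - t ≤ G.dist u r)).card ∧
      ∀ u, n - t ≤ G.dist u r → (G.degree u + W₂.inc u) % (2 * k) = tgt u % (2 * k) := by
    intro t
    induction t with
    | zero =>
      intro _
      refine ⟨W₁, hvis, fun z => rfl, Nat.le_add_right _ _, fun u hu => ?_⟩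
      exfalso
      have := dist_lt_card hconn u r
      omega
    | succ t iht =>
      intro ht
      obtain ⟨W₂, hsup, hpar, hlen, hcong⟩ := iht (by omega)
      set m := n - (t + 1) with hm
      have hm1 : 1 ≤ m := by omega
      have hmt : n - t = m + 1 := by omega
      set L := (univ.filter (fun u => G.dist u r = m)).toList with hL
      have hLnd : L.Nodup := Finset.nodup_toList _
      have hLd : ∀ u ∈ L, G.dist u r = m := by
        intro u hu
        rw [hL, Finset.mem_toList, Finset.mem_filter] at hu
        exact hu.2
      obtain ⟨W₃, hsup3, hpar3, hlen3, hunch3, _, hcong3⟩ :=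
        stage1_inner r W₁ k hk tgt htgtpar w' hwprop m hm1 L hLnd hLd W₂ hsup hpar
      refine ⟨W₃, hsup3, hpar3, ?_, ?_⟩
      · have hLlen : L.length = (univ.filter (fun u => G.dist u r = m)).card :=
          Finset.length_toList _
        have hsplit : (univ.filter (fun u => m ≤ G.dist u r)).card =
            (univ.filter (fun u => G.dist u r = m)).card +
            (univ.filter (fun u => m + 1 ≤ G.dist u r)).card := by
          have h1 : (univ.filter (fun u => m ≤ G.dist u r)) =
              (univ.filter (fun u => G.dist u r = m)) ∪
              (univ.filter (fun u => m + 1 ≤ G.dist u r)) := by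
            rw [← Finset.filter_or]
            apply Finset.filter_congr
            intro x _
            constructor
            · intro h; omega
            · intro h; omega
          rw [h1]
          apply Finset.card_union_of_disjoint
          rw [Finset.disjoint_left]
          intro a ha hb
          rw [Finset.mem_filter] at ha hb
          omega
        rw [hmt] at hlen
        calc W₃.length ≤ W₂.length + (2 * k - 2) * L.length := hlen3
          _ ≤ W₁.length + (2 * k - 2) * (univ.filter (fun u => m + 1 ≤ G.dist u r)).card
              + (2 * k - 2) * (univ.filter (fun u => G.dist u r = m)).card := by
            rw [hLlen] at *; omega
          _ = W₁.length + (2 * k - 2) * (univ.filter (fun u => m ≤ G.dist u r)).card := by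
            rw [hsplit]; ring
      · intro u hu
        -- m = n - (t+1) already abbreviated
        rcases eq_or_lt_of_le hu with heq | hlt
        · apply hcong3
          rw [hL, Finset.mem_toList, Finset.mem_filter]
          exact ⟨Finset.mem_univ _, heq.symm ▸ rfl⟩
        · have hinc_eq : W₃.inc u = W₂.inc u := by
            apply hunch3 <;> omega
          rw [hinc_eq]
          apply hcong
          omega
  have hn1 : 1 ≤ n := by
    rw [hn]
    exact Fintype.card_pos_iff.mpr ⟨r⟩
  obtain ⟨W₂, hsup, _, hlen, hcong⟩ := main (n - 1) (by omega)
  have hfin : n - (n - 1) = 1 := by omega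
  rw [hfin] at hlen hcong
  refine ⟨W₂, hsup, ?_, fun u hu => hcong u ?_⟩
  · have hcard : (univ.filter (fun u => 1 ≤ G.dist u r)).card = n - 1 := by
      have h1 : (univ.filter (fun u => 1 ≤ G.dist u r)) = univ.erase r := by
        ext z
        rw [Finset.mem_filter, Finset.mem_erase]
        constructor
        · intro ⟨_, h⟩
          refine ⟨fun hz => ?_, Finset.mem_univ _⟩
          rw [hz, SimpleGraph.dist_self] at h; omega
        · intro ⟨hz, _⟩
          refine ⟨Finset.mem_univ _, ?_⟩
          have : G.dist z r ≠ 0 := fun h0 => hz (hconn.dist_eq_zero_iff.mp h0)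
          omega
      rw [h1, Finset.card_erase_of_mem (Finset.mem_univ _), Finset.card_univ]
    rw [hcard] at hlen
    exact hlen
  · have : G.dist u r ≠ 0 := fun h0 => hu (hconn.dist_eq_zero_iff.mp h0)
    omega

lemma exists_deg2 [Fintype V] [DecidableEq V] {G : SimpleGraph V} [DecidableRel G.Adj]
    (hconn : G.Connected) (h3 : 3 ≤ Fintype.card V) : ∃ v, 2 ≤ G.degree v := by
  classical
  have hne : Nonempty V := Fintype.card_pos_iff.mp (by omega)
  obtain ⟨r⟩ := hne
  by_cases hfar : ∃ u, 2 ≤ G.dist u r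
  · obtain ⟨u, hu⟩ := hfar
    have hur : u ≠ r := by
      intro h; rw [h, SimpleGraph.dist_self] at hu; omega
    obtain ⟨v, hv, hvd⟩ := exists_parent hconn r u hur
    have hvr : v ≠ r := by
      intro h; rw [h, SimpleGraph.dist_self] at hvd; omega
    obtain ⟨x, hx, hxd⟩ := exists_parent hconn r v hvr
    refine ⟨v, ?_⟩
    rw [← G.card_neighborFinset_eq_degree]
    apply Finset.one_lt_card.mpr
    refine ⟨u, ?_, x, ?_, ?_⟩
    · rw [SimpleGraph.mem_neighborFinset]; exact hv.symm
    · rwa [SimpleGraph.mem_neighborFinset]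
    · intro h
      rw [← h] at hxd
      omega
  · push_neg at hfar
    refine ⟨r, ?_⟩
    rw [← G.card_neighborFinset_eq_degree]
    apply Finset.one_lt_card.mpr
    obtain ⟨u, v, huv, hur, hvr⟩ : ∃ u v : V, u ≠ v ∧ u ≠ r ∧ v ≠ r := by
      have h2 : 1 < (Finset.univ.erase r).card := by
        rw [Finset.card_erase_of_mem (Finset.mem_univ _), Finset.card_univ]
        omega
      obtain ⟨u, hu, v, hv, huv⟩ := Finset.one_lt_card.mp h2
      rw [Finset.mem_erase] at hu hv
      exact ⟨u, v, huv, hu.1, hv.1⟩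
    have hadj : ∀ z, z ≠ r → G.Adj r z := by
      intro z hz
      have h1 : G.dist z r < 2 := hfar z
      have h2 : G.dist z r ≠ 0 := fun h0 => hz (hconn.dist_eq_zero_iff.mp h0)
      have h3 : G.dist z r = 1 := by omega
      rw [SimpleGraph.dist_eq_one_iff_adj] at h3
      exact h3.symm
    refine ⟨u, ?_, v, ?_, huv⟩
    · rw [SimpleGraph.mem_neighborFinset]; exact hadj u hur
    · rw [SimpleGraph.mem_neighborFinset]; exact hadj v hvr

lemma card_two_iso [Fintype V] [DecidableEq V] {G : SimpleGraph V}
    (hconn : G.Connected) (h2 : Fintype.card V = 2) :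
    Nonempty (G ≃g (⊤ : SimpleGraph (Fin 2))) := by
  classical
  have e : V ≃ Fin 2 := Fintype.equivFinOfCardEq h2
  have hadj : ∀ x y : V, x ≠ y → G.Adj x y := by
    intro x y hxy
    obtain ⟨W⟩ := hconn x y
    cases W with
    | nil => exact absurd rfl hxy
    | @cons _ z _ h W' =>
      have hz : z = y := by
        by_contra hzy
        have hzx : z ≠ x := fun hh => G.loopless.irrefl x (hh ▸ h)
        have hc3 : ({x, y, z} : Finset V).card = 3 :=
          Finset.card_eq_three.mpr ⟨x, y, z, hxy, Ne.symm hzx, Ne.symm hzy, rfl⟩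
        have hle : ({x, y, z} : Finset V).card ≤ Fintype.card V :=
          le_trans (Finset.card_le_univ _) (le_of_eq Finset.card_univ)
        omega
      exact hz ▸ h
  refine ⟨⟨e, ?_⟩⟩
  intro x y
  simp only [SimpleGraph.top_adj, ne_eq, EmbeddingLike.apply_eq_iff_eq]
  constructor
  · intro h
    exact hadj x y h
  · intro h
    exact h.ne

/-- If `G` is a connected graph, not isomorphic to `K₂`, with `n` vertices,
maximum degree `Δ` and chromatic number `k`, and `W₀` is a closed walk of length `p`
visiting every vertex, then `G` admits an irregularising walk of length at most
`p + (n-1)(2k-2) + 2Δ`. -/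
theorem stmt_10 {V : Type*} [Fintype V] [DecidableEq V] (G : SimpleGraph V)
    [DecidableRel G.Adj] (hconn : G.Connected)
    (hK2 : ¬ Nonempty (G ≃g (⊤ : SimpleGraph (Fin 2))))
    (k : ℕ) (hk : G.chromaticNumber = (k : ℕ∞))
    {r : V} (W₀ : G.Walk r r) (hvis : ∀ v : V, v ∈ W₀.support) :
    (∃ (a b : V) (W : G.Walk a b), W.Irregularising ∧
        W.length ≤ W₀.length + (Fintype.card V - 1) * (2 * k - 2) + 2 * G.maxDegree) ∧
      MLW G ≤ (W₀.length + (Fintype.card V - 1) * (2 * k - 2) + 2 * G.maxDegree : ℕ) := by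
  classical
  suffices h : ∃ (a b : V) (W : G.Walk a b), W.Irregularising ∧
      W.length ≤ W₀.length + (Fintype.card V - 1) * (2 * k - 2) + 2 * G.maxDegree by
    obtain ⟨a, b, W, hirr, hlen⟩ := h
    refine ⟨⟨a, b, W, hirr, hlen⟩, ?_⟩
    have h1 : MLW G ≤ (W.length : ℕ∞) := by
      calc MLW G ≤ ⨅ (b' : V) (W' : G.Walk a b') (_ : W'.Irregularising),
            (W'.length : ℕ∞) := iInf_le _ a
        _ ≤ ⨅ (W' : G.Walk a b) (_ : W'.Irregularising), (W'.length : ℕ∞) := iInf_le _ b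
        _ ≤ ⨅ (_ : W.Irregularising), (W.length : ℕ∞) := iInf_le _ W
        _ ≤ (W.length : ℕ∞) := iInf_le _ hirr
    exact le_trans h1 (Nat.cast_le.mpr hlen)
  by_cases hsmall : Fintype.card V ≤ 1
  · have hnoadj : ∀ u v : V, ¬ G.Adj u v := fun u v hadj =>
      hadj.ne (Fintype.card_le_one_iff.mp hsmall u v)
    exact ⟨r, r, Walk.nil, fun u v hadj => absurd hadj (hnoadj u v), Nat.zero_le _⟩
  · by_cases h2 : Fintype.card V = 2
    · exact absurd (card_two_iso hconn h2) hK2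
    · have h3 : 3 ≤ Fintype.card V := by omega
      obtain ⟨rr, hdr⟩ := exists_deg2 hconn h3
      set W₁ : G.Walk rr rr := W₀.rotate rr (hvis rr) with hW₁
      have hvis₁ : ∀ z, z ∈ W₁.support := support_rotate_all W₀ (hvis rr) hvis
      have hW₁len : W₁.length = W₀.length := length_rotate' W₀ (hvis rr)
      have hcol : G.Colorable k := SimpleGraph.chromaticNumber_le_iff_colorable.mp (le_of_eq hk)
      have C : G.Coloring (Fin k) := hcol.some
      have hk2 : 2 ≤ k := by
        obtain ⟨u₀, hu₀⟩ := (G.degree_pos_iff_exists_adj rr).mp (by omega)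
        have hCne : C rr ≠ C u₀ := C.valid hu₀
        by_contra hlt
        have h1 : (C rr : ℕ) < k := (C rr).isLt
        have h2' : (C u₀ : ℕ) < k := (C u₀).isLt
        exact hCne (Fin.ext (by omega))
      set tgt : V → ℕ := fun z => 2 * (C z : ℕ) + (G.degree z + W₁.inc z) % 2 with htgt
      have htgtpar : ∀ u, tgt u % 2 = (G.degree u + W₁.inc u) % 2 := by
        intro u
        simp only [htgt]
        omega
      obtain ⟨W₂, hsup2, hlen2, hcong2⟩ :=
        stage1 hconn rr W₁ hvis₁ k (by omega) tgt htgtpar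
      have hproper : ∀ ⦃u w : V⦄, G.Adj u w → u ≠ rr → w ≠ rr →
          (G.degree u + W₂.inc u) ≠ (G.degree w + W₂.inc w) := by
        intro u w hadj hur hwr heq
        have hc1 := hcong2 u hur
        have hc2 := hcong2 w hwr
        rw [heq] at hc1
        have h3' : tgt u % (2 * k) = tgt w % (2 * k) := by rw [← hc1, ← hc2]
        have hcu : (C u : ℕ) < k := (C u).isLt
        have hcw : (C w : ℕ) < k := (C w).isLt
        have h4 : tgt u < 2 * k := by simp only [htgt]; omega
        have h5 : tgt w < 2 * k := by simp only [htgt]; omega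
        rw [Nat.mod_eq_of_lt h4, Nat.mod_eq_of_lt h5] at h3'
        simp only [htgt] at h3'
        exact C.valid hadj (Fin.ext (by omega))
      obtain ⟨e, T, hTlen, hTprop⟩ :=
        rootfix rr hdr (fun z => G.degree z + W₂.inc z) hproper
      refine ⟨rr, e, W₂.append T, ?_, ?_⟩
      · intro u w hadj
        rw [inc_append, inc_append]
        exact fun heq => hTprop hadj (by omega)
      · rw [Walk.length_append]
        have hcomm : (2 * k - 2) * (Fintype.card V - 1) =
            (Fintype.card V - 1) * (2 * k - 2) := Nat.mul_comm _ _
        omega
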